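/- arXiv:1810.07481 — 2 statements merged into one kernel-verified Lean document; each statement's English description precedes it below -/
import Mathlib

section
/- For a linear multi-class classifier f(x) = Wx + b with decision argmax_r f_r(x), if x is classified as class c (strictly), then the minimal l_p-norm of a perturbation delta such that max_{l != c} f_l(x+delta) >= f_c(x+delta) equals min over s != c of |<w_c - w_s, x> + b_c - b_s| / ||w_c - w_s||_q, where q is the Hölder conjugate of p. -/
open scoped BigOperators ENNReal

/-- The `l_p` norm of a vector in `ℝ^d`. -/
noncomputable def pnorm (p : ℝ≥0∞) {d : ℕ} (x : Fin d → ℝ) : ℝ :=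
  ‖(WithLp.equiv p (Fin d → ℝ)).symm x‖

/-- Standard inner product on `ℝ^d`. -/
noncomputable def dotp {d : ℕ} (w x : Fin d → ℝ) : ℝ := ∑ i, w i * x i

section Helpers

variable {d : ℕ}

lemma pnorm_eq_sum {p : ℝ≥0∞} (hp : 0 < p.toReal) (x : Fin d → ℝ) :
    pnorm p x = (∑ i, |x i| ^ p.toReal) ^ (1 / p.toReal) := by
  rw [pnorm, PiLp.norm_eq_sum hp]
  simp [Real.norm_eq_abs]

lemma pnorm_top (x : Fin d → ℝ) : pnorm ∞ x = ⨆ i, |x i| := by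
  rw [pnorm, PiLp.norm_eq_ciSup]
  simp [Real.norm_eq_abs]

lemma pnorm_one (x : Fin d → ℝ) : pnorm 1 x = ∑ i, |x i| := by
  rw [pnorm_eq_sum (by norm_num)]
  simp

lemma pnorm_nonneg (p : ℝ≥0∞) (x : Fin d → ℝ) : 0 ≤ pnorm p x := by
  rcases eq_or_ne p ∞ with rfl | ht
  · rw [pnorm_top]; exact Real.iSup_nonneg fun i => abs_nonneg _
  rcases eq_or_ne p 0 with rfl | h0
  · rw [pnorm, PiLp.norm_eq_card]; positivity
  · rw [pnorm_eq_sum (ENNReal.toReal_pos h0 ht)]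
    exact Real.rpow_nonneg (Finset.sum_nonneg fun i _ => Real.rpow_nonneg (abs_nonneg _) _) _

lemma pnorm_pos {q : ℝ≥0∞} (hq : q ≠ 0) {w : Fin d → ℝ} (hw : w ≠ 0) : 0 < pnorm q w := by
  obtain ⟨j, hj⟩ := Function.ne_iff.mp hw
  by_cases hqt : q = ∞
  · subst hqt
    rw [pnorm_top]
    exact lt_of_lt_of_le (abs_pos.mpr hj) (le_ciSup (f := fun i => |w i|) (Set.finite_range _).bddAbove j)
  · rw [pnorm_eq_sum (ENNReal.toReal_pos hq hqt)]
    apply Real.rpow_pos_of_pos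
    apply Finset.sum_pos' (fun i _ => Real.rpow_nonneg (abs_nonneg _) _)
    exact ⟨j, Finset.mem_univ _, Real.rpow_pos_of_pos (abs_pos.mpr hj) _⟩

lemma holder_top (w δ : Fin d → ℝ) :
    |∑ i, w i * δ i| ≤ (⨆ i, |w i|) * ∑ i, |δ i| := by
  calc |∑ i, w i * δ i| ≤ ∑ i, |w i * δ i| := Finset.abs_sum_le_sum_abs _ _
    _ ≤ ∑ i, (⨆ j, |w j|) * |δ i| := by
        refine Finset.sum_le_sum fun i _ => ?_
        rw [abs_mul]
        exact mul_le_mul_of_nonneg_right (le_ciSup (f := fun j => |w j|) (Set.finite_range _).bddAbove i) (abs_nonneg _)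
    _ = _ := by rw [← Finset.mul_sum]

lemma conj_cases {p q : ℝ≥0∞} (h : p.HolderConjugate q) :
    (p = 1 ∧ q = ∞) ∨ (p = ∞ ∧ q = 1) ∨
      (p ≠ ∞ ∧ q ≠ ∞ ∧ Real.HolderConjugate p.toReal q.toReal) := by
  rcases eq_or_ne p 1 with rfl | hp1
  · left
    refine ⟨rfl, ?_⟩
    have := ENNReal.HolderConjugate.conj_eq (p := 1) (q := q)
    simpa using this
  rcases eq_or_ne p ∞ with rfl | hpt
  · right; left
    refine ⟨rfl, ?_⟩
    have := ENNReal.HolderConjugate.conj_eq (p := ∞) (q := q)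
    simpa using this
  · right; right
    have hp0 : p ≠ 0 := ENNReal.HolderConjugate.ne_zero (p := p) (q := q)
    have hq0 : q ≠ 0 := ENNReal.HolderConjugate.ne_zero (p := q) (q := p)
    have hqt : q ≠ ∞ := by
      rintro rfl
      apply hp1
      have := ENNReal.HolderConjugate.inv_add_inv_eq_one (p := p) (q := ∞)
      simpa using this
    refine ⟨hpt, hqt, Real.holderConjugate_iff.mpr ⟨?_, ?_⟩⟩
    · have h1p : 1 < p := lt_of_le_of_ne (ENNReal.HolderConjugate.one_le (p := p) (q := q)) (Ne.symm hp1)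
      have := (ENNReal.toReal_lt_toReal (by simp) hpt).mpr h1p
      simpa using this
    · have := congrArg ENNReal.toReal (ENNReal.HolderConjugate.inv_add_inv_eq_one (p := p) (q := q))
      rwa [ENNReal.toReal_add (by simp [hp0]) (by simp [hq0]), ENNReal.toReal_inv,
        ENNReal.toReal_inv, ENNReal.toReal_one] at this

lemma pnorm_holder {p q : ℝ≥0∞} (h : p.HolderConjugate q) (w δ : Fin d → ℝ) :
    |∑ i, w i * δ i| ≤ pnorm q w * pnorm p δ := by
  rcases conj_cases h with ⟨rfl, rfl⟩ | ⟨rfl, rfl⟩ | ⟨hpt, hqt, hc⟩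
  · rw [pnorm_one, pnorm_top]
    exact holder_top w δ
  · rw [pnorm_top, pnorm_one]
    calc |∑ i, w i * δ i| = |∑ i, δ i * w i| := by simp [mul_comm]
      _ ≤ (⨆ i, |δ i|) * ∑ i, |w i| := holder_top δ w
      _ = (∑ i, |w i|) * ⨆ i, |δ i| := mul_comm _ _
  · rw [pnorm_eq_sum hc.pos, pnorm_eq_sum hc.symm.pos]
    have h1 := Real.inner_le_Lp_mul_Lq (s := Finset.univ) w δ hc.symm
    have h2 := Real.inner_le_Lp_mul_Lq (s := Finset.univ) (-w) δ hc.symm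
    simp only [Pi.neg_apply, abs_neg, neg_mul] at h2
    rw [Finset.sum_neg_distrib] at h2
    exact abs_le.mpr ⟨by linarith, h1⟩

lemma extremal {p q : ℝ≥0∞} (h : p.HolderConjugate q) {w : Fin d → ℝ} (hw : w ≠ 0) (g : ℝ) :
    ∃ δ : Fin d → ℝ, ∑ i, w i * δ i = -g ∧ pnorm p δ = |g| / pnorm q w := by
  obtain ⟨j, hj⟩ := Function.ne_iff.mp hw
  simp only [Pi.zero_apply] at hj
  have hne : Nonempty (Fin d) := ⟨j⟩
  rcases conj_cases h with ⟨rfl, rfl⟩ | ⟨rfl, rfl⟩ | ⟨hpt, hqt, hc⟩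
  · -- p = 1, q = ∞
    obtain ⟨i0, -, hmax⟩ := Finset.exists_max_image Finset.univ (fun i => |w i|)
      ⟨j, Finset.mem_univ j⟩
    have hw0 : w i0 ≠ 0 := by
      have := lt_of_lt_of_le (abs_pos.mpr hj) (hmax j (Finset.mem_univ j))
      exact abs_pos.mp this
    refine ⟨fun i => if i = i0 then -g / w i0 else 0, ?_, ?_⟩
    · rw [Finset.sum_eq_single i0]
      · simp only [if_true]
        field_simp
      · intro i _ hi; simp [hi]
      · intro hi; exact absurd (Finset.mem_univ i0) hi
    · have hsup : (⨆ i, |w i|) = |w i0| :=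
        le_antisymm (ciSup_le fun i => hmax i (Finset.mem_univ i))
          (le_ciSup (f := fun i => |w i|) (Set.finite_range _).bddAbove i0)
      rw [pnorm_one, pnorm_top, hsup, Finset.sum_eq_single i0]
      · simp [abs_div]
      · intro i _ hi; simp [hi]
      · intro hi; exact absurd (Finset.mem_univ i0) hi
  · -- p = ∞, q = 1
    set S := ∑ i, |w i| with hSdef
    have hS : 0 < S := Finset.sum_pos' (fun i _ => abs_nonneg _)
      ⟨j, Finset.mem_univ j, abs_pos.mpr hj⟩
    refine ⟨fun i => if w i = 0 then 0 else -g * (w i / |w i|) / S, ?_, ?_⟩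
    · have key : ∀ i, w i * (if w i = 0 then 0 else -g * (w i / |w i|) / S)
          = -g * |w i| / S := by
        intro i
        rcases eq_or_ne (w i) 0 with h0 | h0
        · simp [h0]
        · rw [if_neg h0]
          have ha : |w i| ≠ 0 := abs_ne_zero.mpr h0
          field_simp
          linear_combination -g * (abs_mul_abs_self (w i)).symm
      simp only [key]
      rw [← Finset.sum_div, ← Finset.mul_sum, ← hSdef, mul_div_assoc,
        div_self hS.ne', mul_one]
    · have keyabs : ∀ i, |if w i = 0 then 0 else -g * (w i / |w i|) / S|
          = if w i = 0 then 0 else |g| / S := by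
        intro i
        rcases eq_or_ne (w i) 0 with h0 | h0
        · simp [h0]
        · have ha : |w i| ≠ 0 := abs_ne_zero.mpr h0
          rw [if_neg h0, if_neg h0, abs_div, abs_mul, abs_div, abs_abs,
            div_self ha, mul_one, abs_neg, abs_of_pos hS]
      rw [pnorm_top, pnorm_one, ← hSdef]
      simp only [keyabs]
      apply le_antisymm
      · apply ciSup_le
        intro i
        split
        · positivity
        · exact le_rfl
      · have := le_ciSup (f := fun i => if w i = 0 then 0 else |g| / S)
          (Set.finite_range _).bddAbove j
        simpa [if_neg hj] using this
  · -- 1 < p < ∞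
    have hpr := hc.pos
    have hqr := hc.symm.pos
    set pr := p.toReal
    set qr := q.toReal
    set S := ∑ i, |w i| ^ qr with hSdef
    have hS : 0 < S := Finset.sum_pos' (fun i _ => Real.rpow_nonneg (abs_nonneg _) _)
      ⟨j, Finset.mem_univ j, Real.rpow_pos_of_pos (abs_pos.mpr hj) _⟩
    refine ⟨fun i => -g * |w i| ^ qr / (w i * S), ?_, ?_⟩
    · have key : ∀ i, w i * (-g * |w i| ^ qr / (w i * S)) = -g * |w i| ^ qr / S := by
        intro i
        rcases eq_or_ne (w i) 0 with h0 | h0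
        · simp [h0, Real.zero_rpow hqr.ne']
        · field_simp
      simp only [key]
      rw [← Finset.sum_div, ← Finset.mul_sum, ← hSdef, mul_div_assoc,
        div_self hS.ne', mul_one]
    · have key2 : ∀ i, |(-g * |w i| ^ qr / (w i * S))| ^ pr
          = |g| ^ pr * |w i| ^ qr / S ^ pr := by
        intro i
        rcases eq_or_ne (w i) 0 with h0 | h0
        · simp [h0, Real.zero_rpow hqr.ne', Real.zero_rpow hpr.ne']
        · have hwi : (0:ℝ) < |w i| := abs_pos.mpr h0
          have e1 : |(-g * |w i| ^ qr / (w i * S))| = |g| * |w i| ^ (qr - 1) / S := by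
            rw [abs_div, abs_mul, abs_mul, abs_neg,
              abs_of_nonneg (Real.rpow_nonneg (abs_nonneg (w i)) _), abs_of_pos hS,
              Real.rpow_sub hwi, Real.rpow_one]
            field_simp
          rw [e1, Real.div_rpow (by positivity) hS.le,
            Real.mul_rpow (abs_nonneg g) (Real.rpow_nonneg (abs_nonneg _) _),
            ← Real.rpow_mul (abs_nonneg (w i)), hc.symm.sub_one_mul_conj]
      rw [pnorm_eq_sum hpr, pnorm_eq_sum hqr, ← hSdef]
      change (∑ i, |-g * |w i| ^ qr / (w i * S)| ^ pr) ^ (1 / pr) = |g| / S ^ (1 / qr)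
      simp only [key2]
      rw [← Finset.sum_div, ← Finset.mul_sum, ← hSdef]
      have hone : (1:ℝ)/pr + 1/qr = 1 := by
        have := hc.inv_add_inv_eq_one
        rw [one_div, one_div]
        linarith
      have e : S ^ ((1:ℝ)/pr) = S / S ^ ((1:ℝ)/qr) := by
        rw [eq_div_iff (by positivity), ← Real.rpow_add hS, hone, Real.rpow_one]
      rw [Real.div_rpow (by positivity) (by positivity),
        Real.mul_rpow (by positivity) hS.le,
        ← Real.rpow_mul (abs_nonneg g), mul_one_div, div_self hpr.ne', Real.rpow_one,
        ← Real.rpow_mul hS.le, mul_one_div, div_self hpr.ne', Real.rpow_one, e]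
      field_simp

lemma dotp_sub (u v y : Fin d → ℝ) : dotp (u - v) y = dotp u y - dotp v y := by
  simp [dotp, sub_mul, Finset.sum_sub_distrib]

lemma dotp_add_right (w x y : Fin d → ℝ) : dotp w (x + y) = dotp w x + dotp w y := by
  simp [dotp, mul_add, Finset.sum_add_distrib]

end Helpers

/-- Minimal adversarial perturbation for a linear multi-class classifier. -/
theorem stmt2 {d K : ℕ} (hK : 2 ≤ K) (p q : ℝ≥0∞) (hp : 1 ≤ p) (hpq : 1/p + 1/q = 1)
    (W : Fin K → Fin d → ℝ) (b : Fin K → ℝ) (c : Fin K) (x : Fin d → ℝ)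
    (hclass : ∀ s : Fin K, s ≠ c → dotp (W s) x + b s < dotp (W c) x + b c)
    (hW : ∀ s : Fin K, s ≠ c → W c ≠ W s) :
    sInf {r : ℝ | ∃ δ : Fin d → ℝ,
        (∃ s : Fin K, s ≠ c ∧ dotp (W c) (x + δ) + b c ≤ dotp (W s) (x + δ) + b s) ∧
        r = pnorm p δ} =
      sInf {r : ℝ | ∃ s : Fin K, s ≠ c ∧
        r = |dotp (W c - W s) x + (b c - b s)| / pnorm q (W c - W s)} := by
  have hconj : p.HolderConjugate q := ⟨by simpa [one_div] using hpq⟩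
  set A := {r : ℝ | ∃ δ : Fin d → ℝ,
      (∃ s : Fin K, s ≠ c ∧ dotp (W c) (x + δ) + b c ≤ dotp (W s) (x + δ) + b s) ∧
      r = pnorm p δ} with hA
  set B := {r : ℝ | ∃ s : Fin K, s ≠ c ∧
      r = |dotp (W c - W s) x + (b c - b s)| / pnorm q (W c - W s)} with hB
  have hgpos : ∀ s : Fin K, s ≠ c → 0 < dotp (W c - W s) x + (b c - b s) := by
    intro s hs
    have := hclass s hs
    rw [dotp_sub]
    linarith
  have hwne : ∀ s : Fin K, s ≠ c → W c - W s ≠ 0 := fun s hs => sub_ne_zero.mpr (hW s hs)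
  have hN : ∀ s : Fin K, s ≠ c → 0 < pnorm q (W c - W s) := fun s hs =>
    pnorm_pos hconj.symm.ne_zero (hwne s hs)
  have hBne : B.Nonempty := by
    obtain ⟨s, hs⟩ := Fintype.exists_ne_of_one_lt_card (by simpa using by omega : 1 < Fintype.card (Fin K)) c
    exact ⟨_, s, hs, rfl⟩
  have hBfin : B.Finite := by
    apply Set.Finite.subset (Set.finite_range
      (fun s : Fin K => |dotp (W c - W s) x + (b c - b s)| / pnorm q (W c - W s)))
    rintro r ⟨s, -, rfl⟩
    exact ⟨s, rfl⟩
  have memA : sInf B ∈ A := by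
    obtain ⟨s0, hs0, hval⟩ := hBne.csInf_mem hBfin
    obtain ⟨δ, hδ1, hδ2⟩ := extremal hconj (hwne s0 hs0) (dotp (W c - W s0) x + (b c - b s0))
    have hdd : dotp (W c - W s0) δ = -(dotp (W c - W s0) x + (b c - b s0)) := hδ1
    refine ⟨δ, ⟨s0, hs0, ?_⟩, ?_⟩
    · have h1 : dotp (W c - W s0) (x + δ) + (b c - b s0) = 0 := by
        rw [dotp_add_right, hdd]; ring
      rw [dotp_sub] at h1
      rw [show dotp (W c) (x + δ) + b c
          = (dotp (W s0) (x + δ) + b s0) + (dotp (W c) (x+δ) - dotp (W s0) (x+δ) + (b c - b s0)) by ring, h1]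
      simp
    · rw [hδ2, hval]
  have lower : ∀ r ∈ A, sInf B ≤ r := by
    rintro r ⟨δ, ⟨s, hs, hle⟩, rfl⟩
    have e1 : dotp (W c - W s) x = dotp (W c) x - dotp (W s) x := dotp_sub _ _ _
    have e2 : dotp (W c - W s) δ = dotp (W c) δ - dotp (W s) δ := dotp_sub _ _ _
    have e3 : dotp (W c) (x + δ) = dotp (W c) x + dotp (W c) δ := dotp_add_right _ _ _
    have e4 : dotp (W s) (x + δ) = dotp (W s) x + dotp (W s) δ := dotp_add_right _ _ _
    have h1 : dotp (W c - W s) x + (b c - b s) ≤ |dotp (W c - W s) δ| := by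
      have h5 := neg_le_abs (dotp (W c - W s) δ)
      linarith [e1, e2, e3, e4, hle]
    have h2 : |dotp (W c - W s) δ| ≤ pnorm q (W c - W s) * pnorm p δ :=
      pnorm_holder hconj (W c - W s) δ
    have h3 : |dotp (W c - W s) x + (b c - b s)| / pnorm q (W c - W s) ≤ pnorm p δ := by
      rw [div_le_iff₀ (hN s hs), abs_of_pos (hgpos s hs), mul_comm]
      exact le_trans h1 h2
    exact le_trans (csInf_le hBfin.bddBelow ⟨s, hs, rfl⟩) h3
  have bddA : BddBelow A := ⟨0, by rintro r ⟨δ, -, rfl⟩; exact pnorm_nonneg p δ⟩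
  exact le_antisymm (csInf_le bddA memA) (le_csInf ⟨_, memA⟩ lower)
end

section
/- Let f : R^d -> R^K be continuous, and suppose f restricted to a set Q containing x agrees with an affine map g(z) = Vz + a. Let c satisfy f_c(x) > f_s(x) for all s != c. Define d_D(x) = min_{s != c} |<V_c - V_s, x> + a_c - a_s| / ||V_c - V_s||_q, and let d_B(x) be the l_p-distance from x to the closure of the complement of Q. If d_D(x) <= d_B(x), then d_D(x) is the minimal l_p-norm of a perturbation delta such that f_s(x+delta) >= f_c(x+delta) for some s != c. -/
open scoped BigOperators ENNReal

namespace Stmt4Aux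

variable {d : ℕ}

lemma pnorm_eq_sum {p : ℝ≥0∞} (hp : 0 < p.toReal) (x : Fin d → ℝ) :
    pnorm p x = (∑ i, |x i| ^ p.toReal) ^ (1 / p.toReal) := by
  rw [pnorm, PiLp.norm_eq_sum hp]
  simp [Real.norm_eq_abs]

lemma pnorm_top (x : Fin d → ℝ) : pnorm ⊤ x = ⨆ i, |x i| := by
  rw [pnorm, PiLp.norm_eq_ciSup]
  simp [Real.norm_eq_abs]

lemma pnorm_one (x : Fin d → ℝ) : pnorm 1 x = ∑ i, |x i| := by
  rw [pnorm_eq_sum (by norm_num)]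
  simp

lemma pnorm_nonneg {p : ℝ≥0∞} (hp : 1 ≤ p) (x : Fin d → ℝ) : 0 ≤ pnorm p x := by
  haveI : Fact (1 ≤ p) := ⟨hp⟩
  exact norm_nonneg _

lemma pnorm_smul {p : ℝ≥0∞} (hp : 1 ≤ p) (t : ℝ) (x : Fin d → ℝ) :
    pnorm p (t • x) = |t| * pnorm p x := by
  haveI : Fact (1 ≤ p) := ⟨hp⟩
  rw [pnorm, pnorm, ← Real.norm_eq_abs, ← norm_smul]
  congr 1

lemma pnorm_neg {p : ℝ≥0∞} (hp : 1 ≤ p) (x : Fin d → ℝ) :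
    pnorm p (-x) = pnorm p x := by
  have := pnorm_smul hp (-1) x
  simpa using this

lemma pnorm_pos {p : ℝ≥0∞} (hp : 1 ≤ p) {x : Fin d → ℝ} (hx : x ≠ 0) :
    0 < pnorm p x := by
  haveI : Fact (1 ≤ p) := ⟨hp⟩
  have : (WithLp.equiv p (Fin d → ℝ)).symm x ≠ 0 := by
    simpa using hx
  exact norm_pos_iff.mpr this

/-- Case analysis on a pair of conjugate exponents. -/
lemma cases_pq {p q : ℝ≥0∞} (hp : 1 ≤ p) (hpq : 1/p + 1/q = 1) :
    (p = 1 ∧ q = ⊤) ∨ (p = ⊤ ∧ q = 1) ∨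
      (p ≠ ⊤ ∧ q ≠ ⊤ ∧ Real.HolderConjugate p.toReal q.toReal) := by
  rw [one_div, one_div] at hpq
  rcases eq_or_lt_of_le hp with hp1 | hp1
  · left
    refine ⟨hp1.symm, ?_⟩
    rw [← hp1] at hpq
    simp only [inv_one] at hpq
    have hq0 : q⁻¹ = 0 := by
      have := ENNReal.add_right_inj (a := (1 : ℝ≥0∞)) (b := q⁻¹) (c := 0) (by simp)
      rw [add_zero] at this
      exact this.mp hpq
    rwa [ENNReal.inv_eq_zero] at hq0
  rcases eq_or_ne p ⊤ with hpt | hpt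
  · right; left
    refine ⟨hpt, ?_⟩
    rw [hpt] at hpq
    simp only [ENNReal.inv_top, zero_add] at hpq
    rwa [ENNReal.inv_eq_one] at hpq
  · right; right
    refine ⟨hpt, ?_, Real.holderConjugate_iff.mpr ⟨?_, ?_⟩⟩
    · -- q ≠ ⊤
      intro hqt
      rw [hqt] at hpq
      simp only [ENNReal.inv_top, add_zero] at hpq
      rw [ENNReal.inv_eq_one] at hpq
      exact hp1.ne' hpq
    · -- 1 < p.toReal
      have := (ENNReal.toReal_lt_toReal (by simp) hpt).mpr hp1
      simpa using this
    · -- inverses sum to 1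
      have hpinv : p⁻¹ ≠ ⊤ :=
        ENNReal.inv_ne_top.mpr (fun h => by simp [h] at hp1)
      have hqinv : q⁻¹ ≠ ⊤ := by
        intro h
        rw [h] at hpq
        simp at hpq
      have := congrArg ENNReal.toReal hpq
      rw [ENNReal.toReal_add hpinv hqinv, ENNReal.toReal_inv, ENNReal.toReal_inv] at this
      simpa using this

/-- **Hölder's inequality** for `pnorm`. -/
lemma hoelder {p q : ℝ≥0∞} (hp : 1 ≤ p) (hpq : 1/p + 1/q = 1)
    (w x : Fin d → ℝ) : |dotp w x| ≤ pnorm q w * pnorm p x := by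
  have habs : |dotp w x| ≤ ∑ i, |w i| * |x i| := by
    rw [dotp]
    refine (Finset.abs_sum_le_sum_abs _ _).trans ?_
    simp [abs_mul, le_refl]
  rcases cases_pq hp hpq with ⟨hp1, hqt⟩ | ⟨hpt, hq1⟩ | ⟨hpt, hqt, hconj⟩
  · subst hp1; subst hqt
    rw [pnorm_top, pnorm_one, Finset.mul_sum]
    refine habs.trans ?_
    refine Finset.sum_le_sum fun i _ => ?_
    refine mul_le_mul_of_nonneg_right ?_ (abs_nonneg _)
    exact le_ciSup (f := fun i => |w i|) (Set.Finite.bddAbove (Set.finite_range _)) i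
  · subst hpt; subst hq1
    rw [pnorm_top, pnorm_one]
    refine habs.trans ?_
    rw [Finset.sum_mul]
    refine Finset.sum_le_sum fun i _ => ?_
    refine mul_le_mul_of_nonneg_left ?_ (abs_nonneg _)
    exact le_ciSup (f := fun i => |x i|) (Set.Finite.bddAbove (Set.finite_range _)) i
  · have hq0 : 0 < q.toReal := hconj.symm.pos
    have hp0 : 0 < p.toReal := hconj.pos
    rw [pnorm_eq_sum hq0, pnorm_eq_sum hp0]
    refine habs.trans ?_
    have := Real.inner_le_Lp_mul_Lq (s := Finset.univ)
      (f := fun i => |w i|) (g := fun i => |x i|) hconj.symm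
    simpa [abs_abs] using this

/-- Sharpness of Hölder's inequality. -/
lemma sharp {p q : ℝ≥0∞} (hp : 1 ≤ p) (hpq : 1/p + 1/q = 1)
    {w : Fin d → ℝ} (hw : w ≠ 0) {t : ℝ} (ht : 0 ≤ t) :
    ∃ δ : Fin d → ℝ, pnorm p δ = t ∧ dotp w δ = -(t * pnorm q w) := by
  obtain ⟨i0, hi0⟩ : ∃ i, w i ≠ 0 := Function.ne_iff.mp hw
  rcases cases_pq hp hpq with ⟨hp1, hqt⟩ | ⟨hpt, hq1⟩ | ⟨hpt, hqt, hconj⟩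
  · -- p = 1, q = ∞
    subst hp1; subst hqt
    obtain ⟨j, -, hj⟩ := Finset.exists_max_image Finset.univ (fun i => |w i|)
      ⟨i0, Finset.mem_univ i0⟩
    have hjmax : ∀ i, |w i| ≤ |w j| := fun i => hj i (Finset.mem_univ i)
    have hwj : w j ≠ 0 := by
      intro h
      have := hjmax i0
      rw [h] at this
      simp at this
      exact hi0 this
    have hwjabs : 0 < |w j| := abs_pos.mpr hwj
    haveI : Nonempty (Fin d) := ⟨i0⟩
    have hsup : pnorm ⊤ w = |w j| := by
      rw [pnorm_top]
      refine le_antisymm (ciSup_le hjmax) ?_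
      exact le_ciSup (f := fun i => |w i|) (Set.Finite.bddAbove (Set.finite_range _)) j
    refine ⟨fun i => if i = j then -t * (w j / |w j|) else 0, ?_, ?_⟩
    · rw [pnorm_one]
      rw [Finset.sum_eq_single j]
      · simp [abs_mul, abs_div, abs_abs, abs_of_nonneg ht, div_self hwjabs.ne']
      · intro i _ hij; simp [hij]
      · intro h; exact absurd (Finset.mem_univ j) h
    · rw [dotp, hsup, Finset.sum_eq_single j]
      · rw [if_pos rfl]
        have h2 : w j * (-t * (w j / |w j|)) = -(t * ((w j * w j) / |w j|)) := by ring
        rw [h2, ← abs_mul_abs_self, mul_div_assoc, div_self hwjabs.ne', mul_one]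
      · intro i _ hij; simp [hij]
      · intro h; exact absurd (Finset.mem_univ j) h
  · -- p = ∞, q = 1
    subst hpt; subst hq1
    haveI : Nonempty (Fin d) := ⟨i0⟩
    refine ⟨fun i => -t * (w i / |w i|), ?_, ?_⟩
    · rw [pnorm_top]
      have hle : ∀ i, |(-t * (w i / |w i|))| ≤ t := by
        intro i
        rw [abs_mul, abs_neg, abs_of_nonneg ht, abs_div, abs_abs]
        rcases eq_or_ne (w i) 0 with h | h
        · simp [h, ht]
        · rw [div_self (abs_pos.mpr h).ne']
          simp
      refine le_antisymm (ciSup_le hle) ?_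
      have : |(-t * (w i0 / |w i0|))| = t := by
        rw [abs_mul, abs_neg, abs_of_nonneg ht, abs_div, abs_abs,
          div_self (abs_pos.mpr hi0).ne', mul_one]
      calc t = |(-t * (w i0 / |w i0|))| := this.symm
        _ ≤ _ := le_ciSup (f := fun i => |(-t * (w i / |w i|))|)
          (Set.Finite.bddAbove (Set.finite_range _)) i0
    · rw [dotp, pnorm_one]
      have hterm : ∀ i, w i * (-t * (w i / |w i|)) = -(t * |w i|) := by
        intro i
        rcases eq_or_ne (w i) 0 with h | h
        · simp [h]
        · have h2 : w i * (-t * (w i / |w i|)) = -(t * ((w i * w i) / |w i|)) := by ring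
          rw [h2, ← abs_mul_abs_self, mul_div_assoc, div_self (abs_pos.mpr h).ne',
            mul_one]
      rw [Finset.sum_congr rfl fun i _ => hterm i, Finset.sum_neg_distrib,
        ← Finset.mul_sum]
  · -- 1 < p < ∞
    set p' := p.toReal with hp'def
    set q' := q.toReal with hq'def
    have hp0 : 0 < p' := hconj.pos
    have hq0 : 0 < q' := hconj.symm.pos
    have hq1 : 1 < q' := hconj.symm.lt
    set S := ∑ i, |w i| ^ q' with hSdef
    have hS : 0 < S := by
      refine Finset.sum_pos' (fun i _ => Real.rpow_nonneg (abs_nonneg _) _) ?_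
      exact ⟨i0, Finset.mem_univ i0, Real.rpow_pos_of_pos (abs_pos.mpr hi0) _⟩
    have hNq : pnorm q w = S ^ (1 / q') := pnorm_eq_sum hq0 w
    set C := S ^ (1 / p') with hCdef
    have hC : 0 < C := Real.rpow_pos_of_pos hS _
    set δ := fun i => -(t / C) * (w i * |w i| ^ (q' - 2)) with hδdef
    have habs : ∀ i, |w i * |w i| ^ (q' - 2)| = |w i| ^ (q' - 1) := by
      intro i
      rcases eq_or_ne (w i) 0 with h | h
      · simp [h, Real.zero_rpow (ne_of_gt (sub_pos.mpr hq1))]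
      · have hwi : 0 < |w i| := abs_pos.mpr h
        rw [abs_mul, abs_of_nonneg (Real.rpow_nonneg (abs_nonneg _) _)]
        rw [show q' - 1 = 1 + (q' - 2) by ring, Real.rpow_add hwi, Real.rpow_one]
    have hmul : ∀ i, w i * (-(t / C) * (w i * |w i| ^ (q' - 2)))
        = -(t / C) * |w i| ^ q' := by
      intro i
      rcases eq_or_ne (w i) 0 with h | h
      · simp [h, Real.zero_rpow hq0.ne']
      · have hwi : 0 < |w i| := abs_pos.mpr h
        have : w i * (-(t / C) * (w i * |w i| ^ (q' - 2)))
            = -(t / C) * ((w i * w i) * |w i| ^ (q' - 2)) := by ring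
        rw [this, ← abs_mul_abs_self]
        congr 1
        rw [show q' = 1 + (1 + (q' - 2)) by ring, Real.rpow_add hwi,
          Real.rpow_add hwi, Real.rpow_one]
        ring
    have hsum_inv : 1 - 1 / p' = 1 / q' := by
      have := hconj.inv_add_inv_eq_one
      rw [one_div, one_div]
      linarith [this]
    refine ⟨δ, ?_, ?_⟩
    · rw [pnorm_eq_sum hp0]
      have hterm : ∀ i, |δ i| ^ p' = (t / C) ^ p' * |w i| ^ q' := by
        intro i
        rw [hδdef]
        simp only
        rw [abs_mul, abs_neg, abs_of_nonneg (div_nonneg ht hC.le), habs i]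
        rw [Real.mul_rpow (div_nonneg ht hC.le) (Real.rpow_nonneg (abs_nonneg _) _)]
        rw [← Real.rpow_mul (abs_nonneg _), hconj.symm.sub_one_mul_conj]
      rw [Finset.sum_congr rfl fun i _ => hterm i, ← Finset.mul_sum, ← hSdef]
      rw [Real.mul_rpow (Real.rpow_nonneg (div_nonneg ht hC.le) _) hS.le]
      rw [one_div, Real.rpow_rpow_inv (div_nonneg ht hC.le) hp0.ne']
      rw [← one_div, ← hCdef]
      field_simp
    · rw [dotp]
      rw [Finset.sum_congr rfl fun i _ => hmul i, ← Finset.mul_sum, hNq]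
      have hSC : S / C = S ^ (1 / q') := by
        rw [← hsum_inv, Real.rpow_sub hS, Real.rpow_one, hCdef]
      rw [show -(t / C) * S = -(t * (S / C)) by ring, hSC]

end Stmt4Aux

/-- If d_D(x) ≤ d_B(x) then d_D(x) is the minimal l_p-norm of an adversarial
perturbation for a function agreeing with an affine map on Q. -/
theorem stmt4 {d K : ℕ} (p q : ℝ≥0∞) (hp : 1 ≤ p) (hpq : 1/p + 1/q = 1)
    (f : (Fin d → ℝ) → Fin K → ℝ) (hf : Continuous f)
    (Q : Set (Fin d → ℝ)) (V : Fin K → Fin d → ℝ) (a : Fin K → ℝ)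
    (hfQ : ∀ z ∈ Q, ∀ r : Fin K, f z r = dotp (V r) z + a r)
    (x : Fin d → ℝ) (hxQ : x ∈ interior Q) (c : Fin K)
    (hc : ∀ s : Fin K, s ≠ c → f x s < f x c)
    (hV : ∀ s : Fin K, s ≠ c → V c ≠ V s)
    (dD dB : ℝ)
    (hdD : dD = sInf {r : ℝ | ∃ s : Fin K, s ≠ c ∧
        r = |dotp (V c - V s) x + (a c - a s)| / pnorm q (V c - V s)})
    (hdB : dB = sInf {r : ℝ | ∃ z ∈ closure Qᶜ, r = pnorm p (x - z)})
    (hdBpos : 0 < dB) (hDB : dD ≤ dB) :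
    sInf {r : ℝ | ∃ δ : Fin d → ℝ,
        (∃ s : Fin K, s ≠ c ∧ f (x + δ) c ≤ f (x + δ) s) ∧ r = pnorm p δ} = dD := by
  classical
  open Stmt4Aux in
  have hq : 1 ≤ q := by
    rw [← ENNReal.inv_le_one]
    calc q⁻¹ ≤ 1/p + 1/q := by rw [one_div, one_div]; exact le_add_self
      _ = 1 := hpq
  by_cases hK : ∃ s : Fin K, s ≠ c
  case neg =>
    push_neg at hK
    have hTe : {r : ℝ | ∃ s : Fin K, s ≠ c ∧
        r = |dotp (V c - V s) x + (a c - a s)| / pnorm q (V c - V s)} = ∅ := by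
      ext r
      simp only [Set.mem_setOf_eq, Set.mem_empty_iff_false, iff_false, not_exists]
      rintro s ⟨hs, -⟩
      exact hs (hK s)
    have hSe : {r : ℝ | ∃ δ : Fin d → ℝ,
        (∃ s : Fin K, s ≠ c ∧ f (x + δ) c ≤ f (x + δ) s) ∧ r = pnorm p δ} = ∅ := by
      ext r
      simp only [Set.mem_setOf_eq, Set.mem_empty_iff_false, iff_false, not_exists]
      rintro δ ⟨⟨s, hs, -⟩, -⟩
      exact hs (hK s)
    rw [hSe, hdD, hTe]
  case pos =>
    obtain ⟨s₀, hs₀⟩ := hK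
    have hxQ' : x ∈ Q := interior_subset hxQ
    have hdot_sub : ∀ (u v z : Fin d → ℝ), dotp (u - v) z = dotp u z - dotp v z := by
      intro u v z
      rw [dotp, dotp, dotp, ← Finset.sum_sub_distrib]
      refine Finset.sum_congr rfl fun i _ => ?_
      rw [Pi.sub_apply]; ring
    have hdot_add : ∀ (w y z : Fin d → ℝ), dotp w (y + z) = dotp w y + dotp w z := by
      intro w y z
      rw [dotp, dotp, dotp, ← Finset.sum_add_distrib]
      refine Finset.sum_congr rfl fun i _ => ?_
      rw [Pi.add_apply]; ring
    have hdot_smul : ∀ (w : Fin d → ℝ) (t : ℝ) (z : Fin d → ℝ),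
        dotp w (t • z) = t * dotp w z := by
      intro w t z
      rw [dotp, dotp, Finset.mul_sum]
      refine Finset.sum_congr rfl fun i _ => ?_
      rw [Pi.smul_apply, smul_eq_mul]; ring
    have hgap : ∀ z ∈ Q, ∀ s : Fin K,
        f z c - f z s = dotp (V c - V s) z + (a c - a s) := by
      intro z hz s
      rw [hfQ z hz c, hfQ z hz s, hdot_sub]
      ring
    have hM : ∀ s : Fin K, s ≠ c → 0 < dotp (V c - V s) x + (a c - a s) := by
      intro s hs
      rw [← hgap x hxQ' s]
      exact sub_pos.mpr (hc s hs)
    have hNq : ∀ s : Fin K, s ≠ c → 0 < pnorm q (V c - V s) := fun s hs =>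
      pnorm_pos hq (sub_ne_zero.mpr (hV s hs))
    set m : Fin K → ℝ :=
      fun s => (dotp (V c - V s) x + (a c - a s)) / pnorm q (V c - V s) with hm
    have hTmem : ∀ r : ℝ, (r ∈ {r : ℝ | ∃ s : Fin K, s ≠ c ∧
        r = |dotp (V c - V s) x + (a c - a s)| / pnorm q (V c - V s)}) ↔
        ∃ s : Fin K, s ≠ c ∧ r = m s := by
      intro r
      simp only [Set.mem_setOf_eq, hm]
      constructor
      · rintro ⟨s, hs, rfl⟩
        exact ⟨s, hs, by rw [abs_of_pos (hM s hs)]⟩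
      · rintro ⟨s, hs, rfl⟩
        exact ⟨s, hs, by rw [abs_of_pos (hM s hs)]⟩
    obtain ⟨s₁, hs₁mem, hs₁min⟩ := Finset.exists_min_image
      (Finset.univ.filter (· ≠ c)) m ⟨s₀, by simp [hs₀]⟩
    have hs₁ : s₁ ≠ c := by simpa using hs₁mem
    have hmin : ∀ s : Fin K, s ≠ c → m s₁ ≤ m s := fun s hs =>
      hs₁min s (by simp [hs])
    have hdD' : dD = m s₁ := by
      rw [hdD]
      refine le_antisymm (csInf_le ⟨m s₁, ?_⟩ ((hTmem _).mpr ⟨s₁, hs₁, rfl⟩))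
        (le_csInf ⟨_, (hTmem _).mpr ⟨s₁, hs₁, rfl⟩⟩ ?_)
      · intro r hr
        obtain ⟨s, hs, rfl⟩ := (hTmem r).mp hr
        exact hmin s hs
      · intro r hr
        obtain ⟨s, hs, rfl⟩ := (hTmem r).mp hr
        exact hmin s hs
    have hdDle : ∀ s : Fin K, s ≠ c → dD ≤ m s := fun s hs =>
      hdD' ▸ hmin s hs
    have hdDpos : 0 < dD := hdD' ▸ div_pos (hM s₁ hs₁) (hNq s₁ hs₁)
    have hball : ∀ δ : Fin d → ℝ, pnorm p δ < dB → x + δ ∈ Q := by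
      intro δ hδ
      by_contra hout
      have hcl : x + δ ∈ closure Qᶜ := subset_closure hout
      have hmem : pnorm p (x - (x + δ)) ∈
          {r : ℝ | ∃ z ∈ closure Qᶜ, r = pnorm p (x - z)} := ⟨x + δ, hcl, rfl⟩
      have hbdd : BddBelow {r : ℝ | ∃ z ∈ closure Qᶜ, r = pnorm p (x - z)} := by
        refine ⟨0, fun r hr => ?_⟩
        obtain ⟨z, -, rfl⟩ := hr
        exact pnorm_nonneg hp _
      have hle := csInf_le hbdd hmem
      rw [← hdB, show x - (x + δ) = -δ by abel, pnorm_neg hp] at hle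
      exact absurd hδ (not_lt.mpr hle)
    have hlow : ∀ r ∈ {r : ℝ | ∃ δ : Fin d → ℝ,
        (∃ s : Fin K, s ≠ c ∧ f (x + δ) c ≤ f (x + δ) s) ∧ r = pnorm p δ},
        dD ≤ r := by
      rintro r ⟨δ, ⟨s, hs, hle⟩, rfl⟩
      by_cases hδ : pnorm p δ < dB
      · have hQδ : x + δ ∈ Q := hball δ hδ
        have hg := hgap (x + δ) hQδ s
        rw [hdot_add] at hg
        have h1 : dotp (V c - V s) x + (a c - a s) ≤ |dotp (V c - V s) δ| :=
          le_trans (by linarith) (neg_le_abs _)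
        have h2 := hoelder hp hpq (V c - V s) δ
        have h3 : m s ≤ pnorm p δ := by
          rw [hm]
          simp only
          rw [div_le_iff₀ (hNq s hs)]
          exact h1.trans (h2.trans (le_of_eq (mul_comm _ _)))
        exact le_trans (hdDle s hs) h3
      · exact le_trans hDB (le_of_not_gt hδ)
    obtain ⟨δ₀, hδnorm, hδdot⟩ := sharp hp hpq
      (sub_ne_zero.mpr (hV s₁ hs₁)) hdDpos.le
    have hdot : dotp (V c - V s₁) δ₀ = -(dotp (V c - V s₁) x + (a c - a s₁)) := by
      rw [hδdot, hdD', hm]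
      simp only
      rw [div_mul_cancel₀ _ (hNq s₁ hs₁).ne']
    have hseg : ∀ t : ℝ, t ∈ Set.Ico (0:ℝ) 1 →
        f (x + t • δ₀) c - f (x + t • δ₀) s₁ =
          (1 - t) * (dotp (V c - V s₁) x + (a c - a s₁)) := by
      rintro t ⟨ht0, ht1⟩
      have hmem : x + t • δ₀ ∈ Q := by
        apply hball
        rw [pnorm_smul hp, hδnorm, abs_of_nonneg ht0]
        calc t * dD < 1 * dD := mul_lt_mul_of_pos_right ht1 hdDpos
          _ = dD := one_mul dD
          _ ≤ dB := hDB
      have hg := hgap (x + t • δ₀) hmem s₁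
      rw [hdot_add, hdot_smul, hdot] at hg
      rw [hg]; ring
    have hcont : Continuous fun t : ℝ =>
        f (x + t • δ₀) c - f (x + t • δ₀) s₁ := by
      have h1 : Continuous fun t : ℝ => x + t • δ₀ :=
        continuous_const.add (continuous_id.smul continuous_const)
      exact (((continuous_apply c).comp hf).comp h1).sub
        (((continuous_apply s₁).comp hf).comp h1)
    have hlim1 : Filter.Tendsto (fun t : ℝ => f (x + t • δ₀) c - f (x + t • δ₀) s₁)
        (nhdsWithin 1 (Set.Iio 1)) (nhds (f (x + δ₀) c - f (x + δ₀) s₁)) := by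
      have h := (hcont.tendsto 1).mono_left (nhdsWithin_le_nhds (s := Set.Iio (1:ℝ)))
      simpa using h
    have hlim2 : Filter.Tendsto (fun t : ℝ => f (x + t • δ₀) c - f (x + t • δ₀) s₁)
        (nhdsWithin 1 (Set.Iio 1)) (nhds 0) := by
      have hev : ∀ᶠ t in nhdsWithin (1:ℝ) (Set.Iio 1),
          (1 - t) * (dotp (V c - V s₁) x + (a c - a s₁)) =
            f (x + t • δ₀) c - f (x + t • δ₀) s₁ := by
        filter_upwards [Ioo_mem_nhdsLT_of_mem
          (Set.mem_Ioc.mpr ⟨zero_lt_one, le_refl (1:ℝ)⟩)] with t ht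
        exact (hseg t ⟨ht.1.le, ht.2⟩).symm
      have hG : Filter.Tendsto
          (fun t : ℝ => (1 - t) * (dotp (V c - V s₁) x + (a c - a s₁)))
          (nhdsWithin 1 (Set.Iio 1)) (nhds 0) := by
        have h2 : Filter.Tendsto
            (fun t : ℝ => (1 - t) * (dotp (V c - V s₁) x + (a c - a s₁)))
            (nhds 1) (nhds ((1 - 1) * (dotp (V c - V s₁) x + (a c - a s₁)))) := by
          exact ((continuous_const.sub continuous_id).mul continuous_const).tendsto 1
        simpa using h2.mono_left nhdsWithin_le_nhds
      exact Filter.Tendsto.congr' hev hG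
    have heq0 : f (x + δ₀) c - f (x + δ₀) s₁ = 0 := tendsto_nhds_unique hlim1 hlim2
    have hmemS : dD ∈ {r : ℝ | ∃ δ : Fin d → ℝ,
        (∃ s : Fin K, s ≠ c ∧ f (x + δ) c ≤ f (x + δ) s) ∧ r = pnorm p δ} :=
      ⟨δ₀, ⟨s₁, hs₁, by linarith⟩, hδnorm.symm⟩
    exact le_antisymm (csInf_le ⟨dD, hlow⟩ hmemS) (le_csInf ⟨dD, hmemS⟩ hlow)
end
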